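/- For all positive integers a, b, c, d, e there exist a finite type α and finite sets R₁, R₂, R₃, R₄, R₅ of ordered pairs over α with |R₁| = a·b, |R₂| = b·c, |R₃| = c·d, |R₄| = d·e, |R₅| = e·a, such that the number of 5-tuples (v, w, x, y, z) ∈ α⁵ with (v,w) ∈ R₁, (w,x) ∈ R₂, (x,y) ∈ R₃, (y,z) ∈ R₄, (z,v) ∈ R₅ equals a·b·c·d·e; the square of this output size equals the product of the five relation sizes. -/

import Mathlib

/-- For all positive `a, b, c, d, e` there are binary relations of sizes
`a·b, b·c, c·d, d·e, e·a` whose cyclic 5-way join has exactly `a·b·c·d·e`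
output tuples; the square of this output size is the product of the five
relation sizes. -/
theorem stmt_16 (a b c d e : ℕ) (ha : 0 < a) (hb : 0 < b) (hc : 0 < c)
    (hd : 0 < d) (he : 0 < e) :
    ∃ (α : Type) (_ : Fintype α) (_ : DecidableEq α)
      (R₁ R₂ R₃ R₄ R₅ : Finset (α × α)),
      R₁.card = a * b ∧ R₂.card = b * c ∧ R₃.card = c * d ∧
      R₄.card = d * e ∧ R₅.card = e * a ∧
      Nat.card {t : α × α × α × α × α //
          (t.1, t.2.1) ∈ R₁ ∧ (t.2.1, t.2.2.1) ∈ R₂ ∧ (t.2.2.1, t.2.2.2.1) ∈ R₃ ∧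
          (t.2.2.2.1, t.2.2.2.2) ∈ R₄ ∧ (t.2.2.2.2, t.1) ∈ R₅}
        = a * b * c * d * e ∧
      (Nat.card {t : α × α × α × α × α //
          (t.1, t.2.1) ∈ R₁ ∧ (t.2.1, t.2.2.1) ∈ R₂ ∧ (t.2.2.1, t.2.2.2.1) ∈ R₃ ∧
          (t.2.2.2.1, t.2.2.2.2) ∈ R₄ ∧ (t.2.2.2.2, t.1) ∈ R₅}) ^ 2
        = R₁.card * R₂.card * R₃.card * R₄.card * R₅.card := by
  classical
  let pA : Fin a → (Fin a ⊕ Fin b ⊕ Fin c ⊕ Fin d ⊕ Fin e) := fun i => Sum.inl i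
  let pB : Fin b → (Fin a ⊕ Fin b ⊕ Fin c ⊕ Fin d ⊕ Fin e) := fun i => Sum.inr (Sum.inl i)
  let pC : Fin c → (Fin a ⊕ Fin b ⊕ Fin c ⊕ Fin d ⊕ Fin e) := fun i => Sum.inr (Sum.inr (Sum.inl i))
  let pD : Fin d → (Fin a ⊕ Fin b ⊕ Fin c ⊕ Fin d ⊕ Fin e) := fun i => Sum.inr (Sum.inr (Sum.inr (Sum.inl i)))
  let pE : Fin e → (Fin a ⊕ Fin b ⊕ Fin c ⊕ Fin d ⊕ Fin e) := fun i => Sum.inr (Sum.inr (Sum.inr (Sum.inr i)))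
  let R₁ : Finset ((Fin a ⊕ Fin b ⊕ Fin c ⊕ Fin d ⊕ Fin e) × (Fin a ⊕ Fin b ⊕ Fin c ⊕ Fin d ⊕ Fin e)) := Finset.univ.map
    ⟨fun p : Fin a × Fin b => (pA p.1, pB p.2), by
      intro p q h; simp [pA, pB, Prod.ext_iff] at h; exact Prod.ext h.1 h.2⟩
  let R₂ : Finset ((Fin a ⊕ Fin b ⊕ Fin c ⊕ Fin d ⊕ Fin e) × (Fin a ⊕ Fin b ⊕ Fin c ⊕ Fin d ⊕ Fin e)) := Finset.univ.map
    ⟨fun p : Fin b × Fin c => (pB p.1, pC p.2), by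
      intro p q h; simp [pB, pC, Prod.ext_iff] at h; exact Prod.ext h.1 h.2⟩
  let R₃ : Finset ((Fin a ⊕ Fin b ⊕ Fin c ⊕ Fin d ⊕ Fin e) × (Fin a ⊕ Fin b ⊕ Fin c ⊕ Fin d ⊕ Fin e)) := Finset.univ.map
    ⟨fun p : Fin c × Fin d => (pC p.1, pD p.2), by
      intro p q h; simp [pC, pD, Prod.ext_iff] at h; exact Prod.ext h.1 h.2⟩
  let R₄ : Finset ((Fin a ⊕ Fin b ⊕ Fin c ⊕ Fin d ⊕ Fin e) × (Fin a ⊕ Fin b ⊕ Fin c ⊕ Fin d ⊕ Fin e)) := Finset.univ.map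
    ⟨fun p : Fin d × Fin e => (pD p.1, pE p.2), by
      intro p q h; simp [pD, pE, Prod.ext_iff] at h; exact Prod.ext h.1 h.2⟩
  let R₅ : Finset ((Fin a ⊕ Fin b ⊕ Fin c ⊕ Fin d ⊕ Fin e) × (Fin a ⊕ Fin b ⊕ Fin c ⊕ Fin d ⊕ Fin e)) := Finset.univ.map
    ⟨fun p : Fin e × Fin a => (pE p.1, pA p.2), by
      intro p q h; simp [pE, pA, Prod.ext_iff] at h; exact Prod.ext h.1 h.2⟩
  have c₁ : R₁.card = a * b := by simp [R₁]
  have c₂ : R₂.card = b * c := by simp [R₂]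
  have c₃ : R₃.card = c * d := by simp [R₃]
  have c₄ : R₄.card = d * e := by simp [R₄]
  have c₅ : R₅.card = e * a := by simp [R₅]
  have key : Nat.card {t : (Fin a ⊕ Fin b ⊕ Fin c ⊕ Fin d ⊕ Fin e) × (Fin a ⊕ Fin b ⊕ Fin c ⊕ Fin d ⊕ Fin e) × (Fin a ⊕ Fin b ⊕ Fin c ⊕ Fin d ⊕ Fin e) × (Fin a ⊕ Fin b ⊕ Fin c ⊕ Fin d ⊕ Fin e) × (Fin a ⊕ Fin b ⊕ Fin c ⊕ Fin d ⊕ Fin e) //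
          (t.1, t.2.1) ∈ R₁ ∧ (t.2.1, t.2.2.1) ∈ R₂ ∧ (t.2.2.1, t.2.2.2.1) ∈ R₃ ∧
          (t.2.2.2.1, t.2.2.2.2) ∈ R₄ ∧ (t.2.2.2.2, t.1) ∈ R₅} = a * b * c * d * e := by
      have hbij : Function.Bijective
          (fun q : Fin a × Fin b × Fin c × Fin d × Fin e =>
            (⟨(pA q.1, pB q.2.1, pC q.2.2.1, pD q.2.2.2.1, pE q.2.2.2.2),
              by
                refine ⟨?_, ?_, ?_, ?_, ?_⟩ <;>
                  simp [R₁, R₂, R₃, R₄, R₅, Finset.mem_map] <;> exact ⟨_, _, rfl⟩⟩ :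
            {t : (Fin a ⊕ Fin b ⊕ Fin c ⊕ Fin d ⊕ Fin e) × (Fin a ⊕ Fin b ⊕ Fin c ⊕ Fin d ⊕ Fin e) × (Fin a ⊕ Fin b ⊕ Fin c ⊕ Fin d ⊕ Fin e) × (Fin a ⊕ Fin b ⊕ Fin c ⊕ Fin d ⊕ Fin e) × (Fin a ⊕ Fin b ⊕ Fin c ⊕ Fin d ⊕ Fin e) //
              (t.1, t.2.1) ∈ R₁ ∧ (t.2.1, t.2.2.1) ∈ R₂ ∧ (t.2.2.1, t.2.2.2.1) ∈ R₃ ∧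
              (t.2.2.2.1, t.2.2.2.2) ∈ R₄ ∧ (t.2.2.2.2, t.1) ∈ R₅})) := by
        constructor
        · intro p q h
          simp only [Subtype.mk.injEq, Prod.ext_iff, pA, pB, pC, pD, pE] at h
          simp_all [Prod.ext_iff]
        · rintro ⟨⟨v, w, x, y, z⟩, h1, h2, h3, h4, h5⟩
          simp only [R₁, R₂, R₃, R₄, R₅, Finset.mem_map, Finset.mem_univ,
            Function.Embedding.coeFn_mk, Prod.ext_iff, Prod.exists] at h1 h2 h3 h4 h5
          obtain ⟨i, j, -, hi, hj⟩ := h1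
          obtain ⟨j', k, -, hj', hk⟩ := h2
          obtain ⟨k', l, -, hk', hl⟩ := h3
          obtain ⟨l', m, -, hl', hm⟩ := h4
          obtain ⟨m', i', -, hm', hi'⟩ := h5
          refine ⟨⟨i, j, k, l, m⟩, ?_⟩
          simp only [Subtype.mk.injEq, Prod.ext_iff]
          exact ⟨hi, hj, hk, hl, hm⟩
      rw [← Nat.card_eq_of_bijective _ hbij]
      simp [Nat.card_eq_fintype_card, mul_assoc]
  exact ⟨(Fin a ⊕ Fin b ⊕ Fin c ⊕ Fin d ⊕ Fin e), inferInstance, inferInstance, R₁, R₂, R₃, R₄, R₅, c₁, c₂, c₃, c₄, c₅, key,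
    by rw [key, c₁, c₂, c₃, c₄, c₅]; ring⟩
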